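/- There exists a set A of infinite partitions of ℕ which is not dual-Ramsey; that is, for every infinite partition X of ℕ there exist infinite partitions Y and Z coarser than X with Y ∈ A and Z ∉ A. (Uses the axiom of choice.) -/
import Mathlib


/-- The set of infinite partitions of ℕ, identified with equivalence relations
on ℕ with infinite quotient. -/
abbrev InfPart := {X : Setoid ℕ // Infinite (Quotient X)}

/-- The dual Ellentuck neighborhood `[s,X]_n`: all infinite partitions `Y` such that
`s` is an `n`-segment of `Y` and `Y` is coarser than `X`. -/
def nbhd (n : ℕ) (s : ℕ → ℕ → Prop) (X : InfPart) : Set InfPart :=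
  {Y | (∀ i < n, ∀ j < n, (s i j ↔ Y.1.r i j)) ∧ ∀ a b, X.1.r a b → Y.1.r a b}

/-- The condition for `[s,X]_n` to be a (nonempty-typed) dual Ellentuck neighborhood:
`∀ i j < n, X.r i j → s i j`. -/
def IsNbhd (n : ℕ) (s : ℕ → ℕ → Prop) (X : InfPart) : Prop :=
  ∀ i < n, ∀ j < n, (X.1.r i j → s i j)


/-- A partition Y is coarser than X. -/
def Coarser (Y X : Setoid ℕ) : Prop := ∀ n m, X.r n m → Y.r n m

/-- `(X)^ω`: the set of all infinite partitions coarser than X. -/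
def cone (X : InfPart) : Set InfPart := {Y | Coarser Y.1 X.1}

/-- A set of infinite partitions is dual-Ramsey. -/
def DualRamsey (A : Set InfPart) : Prop :=
  ∃ X : InfPart, cone X ⊆ A ∨ cone X ∩ A = ∅

open Cardinal

/-- Partition with one class {0..n} and singletons. -/
def segSetoid (n : ℕ) : Setoid ℕ :=
  ⟨fun a b => a = b ∨ (a ≤ n ∧ b ≤ n),
    ⟨fun _ => Or.inl rfl, fun h => by tauto, fun h1 h2 => by
      rcases h1 with rfl | h1
      · exact h2
      · rcases h2 with rfl | h2 <;> [exact Or.inr h1; exact Or.inr ⟨h1.1, h2.2⟩]⟩⟩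

lemma segSetoid_infinite (n : ℕ) : Infinite (Quotient (segSetoid n)) := by
  refine Infinite.of_injective (fun k : ℕ => (⟦n + 1 + k⟧ : Quotient (segSetoid n))) ?_
  intro a b h
  rcases Quotient.exact h with h' | ⟨h', _⟩
  · omega
  · omega

instance : Infinite InfPart := by
  refine Infinite.of_injective (fun n => (⟨segSetoid n, segSetoid_infinite n⟩ : InfPart)) ?_
  intro n m h
  have h' : segSetoid n = segSetoid m := congrArg Subtype.val h
  have key : ∀ k, (segSetoid n).r 0 k ↔ k ≤ n := by
    intro k
    constructor
    · rintro (rfl | ⟨_, hk⟩) <;> omega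
    · intro hk; exact Or.inr ⟨Nat.zero_le n, hk⟩
  have key' : ∀ k, (segSetoid m).r 0 k ↔ k ≤ m := by
    intro k
    constructor
    · rintro (rfl | ⟨_, hk⟩) <;> omega
    · intro hk; exact Or.inr ⟨Nat.zero_le m, hk⟩
  have h1 : n ≤ m := (key' n).1 (h' ▸ (key n).2 le_rfl)
  have h2 : m ≤ n := (key m).1 (h'.symm ▸ (key' m).2 le_rfl)
  omega

lemma le_mk_cone (X : InfPart) : #InfPart ≤ #(cone X) := by
  have hc : Countable (Quotient X.1) := inferInstance
  have hi : Infinite (Quotient X.1) := X.2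
  obtain ⟨d⟩ := nonempty_denumerable (Quotient X.1)
  let e : Quotient X.1 ≃ ℕ := Denumerable.eqv _
  let h : ℕ → ℕ := fun n => ((e.symm n).out : ℕ)
  have he : ∀ n, e ⟦h n⟧ = n := fun n => by
    simp only [h, Quotient.out_eq, Equiv.apply_symm_apply]
  let G : InfPart → Setoid ℕ := fun P =>
    ⟨fun a b => P.1.r (e ⟦a⟧) (e ⟦b⟧),
      ⟨fun _ => P.1.refl _, fun hab => P.1.symm hab, fun hab hbc => P.1.trans hab hbc⟩⟩
  have hGinf : ∀ P : InfPart, Infinite (Quotient (G P)) := by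
    intro P
    have : Infinite (Quotient P.1) := P.2
    have wd : ∀ a b : ℕ, P.1.r a b → (⟦h a⟧ : Quotient (G P)) = ⟦h b⟧ := by
      intro a b hab
      refine Quotient.sound ?_
      show P.1.r (e ⟦h a⟧) (e ⟦h b⟧)
      rw [he a, he b]; exact hab
    refine Infinite.of_injective (Quotient.lift (fun n : ℕ => (⟦h n⟧ : Quotient (G P))) wd) ?_
    intro q1 q2
    induction q1 using Quotient.ind
    induction q2 using Quotient.ind
    intro hq
    have : (G P).r _ _ := Quotient.exact hq
    have : P.1.r (e ⟦h _⟧) (e ⟦h _⟧) := this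
    rw [he, he] at this
    exact Quotient.sound this
  let F : InfPart → ↥(cone X) := fun P =>
    ⟨⟨G P, hGinf P⟩, by
      intro a b hab
      show P.1.r (e ⟦a⟧) (e ⟦b⟧)
      rw [show (⟦a⟧ : Quotient X.1) = ⟦b⟧ from Quotient.sound hab]⟩
  refine Cardinal.mk_le_of_injective (f := F) ?_
  intro P Q hPQ
  have hG : G P = G Q := congrArg (fun y => (y : ↥(cone X)).1.1) hPQ
  have hGr : ∀ a b, (G P).r a b ↔ (G Q).r a b := fun a b => by rw [hG]
  refine Subtype.ext (Setoid.ext fun n m => ?_)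
  have := hGr (h n) (h m)
  show P.1.r n m ↔ Q.1.r n m
  rw [← he n, ← he m]
  exact this


lemma diff_ne {α : Type*} {s t : Set α} (h : #t < #s) : (s \ t).Nonempty := by
  rw [Set.nonempty_iff_ne_empty]
  intro he
  rw [Set.diff_eq_empty] at he
  exact absurd (Cardinal.mk_le_mk_of_subset he) (not_le.2 h)

noncomputable def toB : InfPart ≃ (#InfPart).ord.ToType :=
  (Cardinal.eq.1 (Cardinal.mk_ord_toType #InfPart).symm).some

def rel (a b : InfPart) : Prop := toB a < toB b

lemma rel_wf : WellFounded rel := InvImage.wf toB (wellFounded_lt)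

lemma mk_rel_lt (X : InfPart) : #{X' // rel X' X} < #InfPart := by
  have h1 : #{X' // rel X' X} ≤ #(Set.Iio (toB X)) :=
    Cardinal.mk_le_of_injective (f := fun p : {X' // rel X' X} => (⟨toB p.1, p.2⟩ : Set.Iio (toB X)))
      (fun p q hpq => Subtype.ext (toB.injective (congrArg Subtype.val hpq)))
  exact lt_of_le_of_lt h1 (Cardinal.mk_Iio_ord_toType _)

lemma exists_pair (X : InfPart) (g : ∀ X', rel X' X → InfPart × InfPart) :
    ∃ p : InfPart × InfPart, p.1 ∈ cone X ∧ p.2 ∈ cone X ∧ p.1 ≠ p.2 ∧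
      ∀ X' (h : rel X' X), p.1 ≠ (g X' h).1 ∧ p.1 ≠ (g X' h).2 ∧
        p.2 ≠ (g X' h).1 ∧ p.2 ≠ (g X' h).2 := by
  classical
  set B : Set InfPart := (Set.range fun p : {X' // rel X' X} => (g p.1 p.2).1) ∪
      (Set.range fun p : {X' // rel X' X} => (g p.1 p.2).2) with hBdef
  have hB : #B < #InfPart :=
    lt_of_le_of_lt (Cardinal.mk_union_le _ _)
      (Cardinal.add_lt_of_lt (Cardinal.aleph0_le_mk _)
        (lt_of_le_of_lt Cardinal.mk_range_le (mk_rel_lt X))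
        (lt_of_le_of_lt Cardinal.mk_range_le (mk_rel_lt X)))
  obtain ⟨Y, hY⟩ := diff_ne (α := InfPart) (s := cone X) (t := B)
    (lt_of_lt_of_le hB (le_mk_cone X))
  have hB' : #(B ∪ {Y} : Set InfPart) < #InfPart :=
    lt_of_le_of_lt (Cardinal.mk_union_le _ _)
      (Cardinal.add_lt_of_lt (Cardinal.aleph0_le_mk _) hB
        (lt_of_le_of_lt (le_of_eq (Cardinal.mk_singleton _)) (Cardinal.one_lt_aleph0.trans_le
          (Cardinal.aleph0_le_mk _))))
  obtain ⟨Z, hZ⟩ := diff_ne (α := InfPart) (s := cone X) (t := B ∪ {Y})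
    (lt_of_lt_of_le hB' (le_mk_cone X))
  refine ⟨(Y, Z), hY.1, hZ.1, ?_, ?_⟩
  · intro hYZ
    exact hZ.2 (Or.inr (show Z ∈ ({Y} : Set InfPart) from hYZ.symm))
  · intro X' h
    refine ⟨?_, ?_, ?_, ?_⟩ <;> intro hEq
    · exact hY.2 (Or.inl ⟨⟨X', h⟩, hEq.symm⟩)
    · exact hY.2 (Or.inr ⟨⟨X', h⟩, hEq.symm⟩)
    · exact hZ.2 (Or.inl (Or.inl ⟨⟨X', h⟩, hEq.symm⟩))
    · exact hZ.2 (Or.inl (Or.inr ⟨⟨X', h⟩, hEq.symm⟩))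

noncomputable def pick : InfPart → InfPart × InfPart :=
  rel_wf.fix (fun X ih => (exists_pair X ih).choose)

lemma pick_spec (X : InfPart) :
    (pick X).1 ∈ cone X ∧ (pick X).2 ∈ cone X ∧ (pick X).1 ≠ (pick X).2 ∧
      ∀ X' (_ : rel X' X), (pick X).1 ≠ (pick X').1 ∧ (pick X).1 ≠ (pick X').2 ∧
        (pick X).2 ≠ (pick X').1 ∧ (pick X).2 ≠ (pick X').2 := by
  have hfix : pick X = (exists_pair X (fun X' _ => pick X')).choose :=
    rel_wf.fix_eq (fun X ih => (exists_pair X ih).choose) X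
  have := (exists_pair X (fun X' _ => pick X')).choose_spec
  rw [← hfix] at this
  exact this

/-- There is a set of infinite partitions which is not dual-Ramsey. -/
theorem exists_not_dualRamsey :
    ∃ A : Set InfPart, ∀ X : InfPart,
      (∃ Y : InfPart, Coarser Y.1 X.1 ∧ Y ∈ A) ∧
      (∃ Z : InfPart, Coarser Z.1 X.1 ∧ Z ∉ A) := by
  refine ⟨Set.range fun X => (pick X).1, fun X => ?_⟩
  obtain ⟨h1, h2, h3, h4⟩ := pick_spec X
  refine ⟨⟨(pick X).1, h1, ⟨X, rfl⟩⟩, ⟨(pick X).2, h2, ?_⟩⟩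
  rintro ⟨X', hX'⟩
  rcases lt_trichotomy (toB X') (toB X) with hlt | heq | hgt
  · exact ((h4 X' hlt).2.2.1) hX'.symm
  · have : X' = X := toB.injective heq
    subst this
    exact h3 hX'
  · exact ((pick_spec X').2.2.2 X hgt).2.1 hX'
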